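/- Let −1/2 < ν < 1 and set C_{ν1} = min{1−ν, 1+2ν} and C_{ν2} = max{1−ν, 1+2ν}. Let F : ℝ³ → [0,∞) be measurable with ∫F(v)(1+|v|²)dv < ∞ and ρ := ∫F dv > 0, and define U, Θ, T and 𝒯_ν = (1−ν)T·Id + νΘ as the associated macroscopic fields. If in addition T > 0, then 𝒯_ν is invertible, and for every k ∈ ℝ³: (C_{ν2}⁻¹/T)·|k|² ≤ kᵀ𝒯_ν⁻¹ k ≤ (C_{ν1}⁻¹/T)·|k|². -/

import Mathlib

open MeasureTheory Matrix

/-- Macroscopic density `ρ = ∫ F dv`. -/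
noncomputable def density (F : (Fin 3 → ℝ) → ℝ) : ℝ := ∫ v : Fin 3 → ℝ, F v

/-- Bulk velocity `U = ρ⁻¹ ∫ F v dv`. -/
noncomputable def bulkVel (F : (Fin 3 → ℝ) → ℝ) : Fin 3 → ℝ := fun i =>
  (∫ v : Fin 3 → ℝ, F v * v i) / density F

/-- Stress tensor `Θ = ρ⁻¹ ∫ F (v−U)⊗(v−U) dv`. -/
noncomputable def stress (F : (Fin 3 → ℝ) → ℝ) : Matrix (Fin 3) (Fin 3) ℝ :=
  Matrix.of fun i j =>
    (∫ v : Fin 3 → ℝ, F v * (v i - bulkVel F i) * (v j - bulkVel F j)) / density F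

/-- Temperature `T = (1/3) tr Θ`. -/
noncomputable def temp (F : (Fin 3 → ℝ) → ℝ) : ℝ := (stress F).trace / 3

/-- ES-BGK temperature tensor `𝒯_ν = (1−ν)T·Id + νΘ`. -/
noncomputable def tempTensor (ν : ℝ) (F : (Fin 3 → ℝ) → ℝ) : Matrix (Fin 3) (Fin 3) ℝ :=
  ((1 - ν) * temp F) • (1 : Matrix (Fin 3) (Fin 3) ℝ) + ν • stress F

section Aux

variable {F : (Fin 3 → ℝ) → ℝ}

/-- Integrability of second-moment-type integrands. -/
lemma aux_int (hFmeas : Measurable F) (hFnonneg : ∀ v, 0 ≤ F v)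
    (hFint : Integrable (fun v : Fin 3 → ℝ => F v * (1 + ∑ i, (v i)^2)) volume)
    (a b : ℝ) (i j : Fin 3) :
    Integrable (fun v : Fin 3 → ℝ => F v * (v i - a) * (v j - b)) volume := by
  refine Integrable.mono' (hFint.const_mul (2 + a^2 + b^2)) ?_ ?_
  · exact ((hFmeas.mul ((measurable_pi_apply i).sub measurable_const)).mul
      ((measurable_pi_apply j).sub measurable_const)).aestronglyMeasurable
  · refine Filter.Eventually.of_forall fun v => ?_
    have h1 : (v i)^2 ≤ ∑ l, (v l)^2 :=
      Finset.single_le_sum (f := fun l => (v l)^2) (fun l _ => sq_nonneg _) (Finset.mem_univ i)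
    have h2 : (v j)^2 ≤ ∑ l, (v l)^2 :=
      Finset.single_le_sum (f := fun l => (v l)^2) (fun l _ => sq_nonneg _) (Finset.mem_univ j)
    have h0 : (0:ℝ) ≤ ∑ l, (v l)^2 := Finset.sum_nonneg fun l _ => sq_nonneg _
    have hF := hFnonneg v
    rw [Real.norm_eq_abs, abs_mul, abs_mul, abs_of_nonneg hF, mul_assoc]
    rw [show (2 + a^2 + b^2) * (F v * (1 + ∑ l, (v l)^2))
        = F v * ((2 + a^2 + b^2) * (1 + ∑ l, (v l)^2)) by ring]
    refine mul_le_mul_of_nonneg_left ?_ hF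
    have ha := abs_nonneg (v i - a)
    have hb := abs_nonneg (v j - b)
    have hia : |v i - a|^2 = (v i - a)^2 := sq_abs _
    have hjb : |v j - b|^2 = (v j - b)^2 := sq_abs _
    nlinarith [sq_nonneg (|v i - a| - |v j - b|), sq_nonneg (v i + a), sq_nonneg (v j + b),
      sq_nonneg a, sq_nonneg b]

/-- Symmetric matrices move across the dot product. -/
lemma symm_dot {S : Matrix (Fin 3) (Fin 3) ℝ} (hS : Sᵀ = S) (a b : Fin 3 → ℝ) :
    (S *ᵥ a) ⬝ᵥ b = a ⬝ᵥ (S *ᵥ b) := by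
  calc (S *ᵥ a) ⬝ᵥ b = b ⬝ᵥ (S *ᵥ a) := dotProduct_comm _ _
    _ = (b ᵥ* S) ⬝ᵥ a := dotProduct_mulVec _ _ _
    _ = (Sᵀ *ᵥ b) ⬝ᵥ a := by rw [Matrix.mulVec_transpose]
    _ = (S *ᵥ b) ⬝ᵥ a := by rw [hS]
    _ = a ⬝ᵥ (S *ᵥ b) := dotProduct_comm _ _

end Aux

/-- For `−1/2 < ν < 1` and positive temperature, the temperature tensor is invertible and
`(C_{ν2}⁻¹/T)|k|² ≤ kᵀ𝒯_ν⁻¹ k ≤ (C_{ν1}⁻¹/T)|k|²` with `C_{ν1} = min{1−ν, 1+2ν}`,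
`C_{ν2} = max{1−ν, 1+2ν}`. -/
theorem tempTensor_inv_comparable (ν : ℝ) (hν1 : -(1/2) < ν) (hν2 : ν < 1)
    (F : (Fin 3 → ℝ) → ℝ) (hFmeas : Measurable F) (hFnonneg : ∀ v, 0 ≤ F v)
    (hFint : Integrable (fun v : Fin 3 → ℝ => F v * (1 + ∑ i, (v i)^2)) volume)
    (hρ : 0 < density F) (hT : 0 < temp F) :
    IsUnit (tempTensor ν F) ∧
    ∀ k : Fin 3 → ℝ,
      (max (1 - ν) (1 + 2*ν))⁻¹ / temp F * (∑ i, (k i)^2)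
          ≤ k ⬝ᵥ ((tempTensor ν F)⁻¹ *ᵥ k) ∧
      k ⬝ᵥ ((tempTensor ν F)⁻¹ *ᵥ k)
          ≤ (min (1 - ν) (1 + 2*ν))⁻¹ / temp F * (∑ i, (k i)^2) := by
  set U : Fin 3 → ℝ := bulkVel F with hU
  set T : ℝ := temp F with hTdef
  have hint : ∀ i j : Fin 3,
      Integrable (fun v : Fin 3 → ℝ => F v * (v i - U i) * (v j - U j)) volume :=
    fun i j => aux_int hFmeas hFnonneg hFint (U i) (U j) i j
  -- pointwise expansion of the quadratic integrand
  have hexp : ∀ (k : Fin 3 → ℝ) (v : Fin 3 → ℝ),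
      F v * (∑ i, k i * (v i - U i))^2
        = ∑ i, ∑ j, k i * k j * (F v * (v i - U i) * (v j - U j)) := by
    intro k v
    rw [sq, Finset.sum_mul_sum, Finset.mul_sum]
    refine Finset.sum_congr rfl fun i _ => ?_
    rw [Finset.mul_sum]
    exact Finset.sum_congr rfl fun j _ => by ring
  have hintq : ∀ k : Fin 3 → ℝ,
      Integrable (fun v : Fin 3 → ℝ => F v * (∑ i, k i * (v i - U i))^2) volume := by
    intro k
    rw [show (fun v : Fin 3 → ℝ => F v * (∑ i, k i * (v i - U i))^2)
        = fun v => ∑ i, ∑ j, k i * k j * (F v * (v i - U i) * (v j - U j))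
        from funext (hexp k)]
    exact integrable_finset_sum _ fun i _ =>
      integrable_finset_sum _ fun j _ => (hint i j).const_mul _
  -- quadratic form of the stress tensor
  have hquad : ∀ k : Fin 3 → ℝ, k ⬝ᵥ (stress F *ᵥ k)
      = (∫ v : Fin 3 → ℝ, F v * (∑ i, k i * (v i - U i))^2) / density F := by
    intro k
    have hI : (∫ v : Fin 3 → ℝ, F v * (∑ i, k i * (v i - U i))^2)
        = ∑ i, ∑ j, k i * k j * ∫ v : Fin 3 → ℝ, F v * (v i - U i) * (v j - U j) := by
      simp_rw [hexp k]
      rw [integral_finset_sum _ (fun i _ =>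
        integrable_finset_sum _ (fun j _ => (hint i j).const_mul _))]
      refine Finset.sum_congr rfl fun i _ => ?_
      rw [integral_finset_sum _ (fun j _ => (hint i j).const_mul _)]
      exact Finset.sum_congr rfl fun j _ => integral_const_mul _ _
    rw [hI]
    simp only [dotProduct, mulVec, stress, Matrix.of_apply, hU]
    rw [Finset.sum_div]
    refine Finset.sum_congr rfl fun i _ => ?_
    rw [Finset.sum_div, Finset.mul_sum]
    refine Finset.sum_congr rfl fun j _ => ?_
    field_simp
  -- integrable "second moment" function
  have hg : Integrable (fun v : Fin 3 → ℝ => F v * ∑ i, (v i - U i)^2) volume := by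
    rw [show (fun v : Fin 3 → ℝ => F v * ∑ i, (v i - U i)^2)
        = fun v => ∑ i, F v * (v i - U i) * (v i - U i) from funext fun v => by
          rw [Finset.mul_sum]; exact Finset.sum_congr rfl fun i _ => by ring]
    exact integrable_finset_sum _ fun i _ => hint i i
  -- trace formula
  have htr : (stress F).trace = (∫ v : Fin 3 → ℝ, F v * ∑ i, (v i - U i)^2) / density F := by
    rw [show (fun v : Fin 3 → ℝ => F v * ∑ i, (v i - U i)^2)
        = fun v => ∑ i, F v * (v i - U i) * (v i - U i) from funext fun v => by
          rw [Finset.mul_sum]; exact Finset.sum_congr rfl fun i _ => by ring]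
    rw [integral_finset_sum _ fun i _ => hint i i, Finset.sum_div]
    simp only [Matrix.trace, Matrix.diag, stress, Matrix.of_apply, hU]
  -- nonnegativity of stress quadratic form
  have hq0 : ∀ k : Fin 3 → ℝ, 0 ≤ k ⬝ᵥ (stress F *ᵥ k) := by
    intro k
    rw [hquad k]
    exact div_nonneg (integral_nonneg fun v => mul_nonneg (hFnonneg v) (sq_nonneg _)) hρ.le
  -- upper bound of stress quadratic form
  have hq3 : ∀ k : Fin 3 → ℝ, k ⬝ᵥ (stress F *ᵥ k) ≤ 3 * T * ∑ i, (k i)^2 := by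
    intro k
    rw [hquad k]
    have h3T : 3 * T = (stress F).trace := by rw [hTdef, temp]; ring
    have hmono : (∫ v : Fin 3 → ℝ, F v * (∑ i, k i * (v i - U i))^2)
        ≤ ∫ v : Fin 3 → ℝ, (F v * ∑ i, (v i - U i)^2) * ∑ i, (k i)^2 := by
      refine integral_mono (hintq k) (hg.mul_const _) fun v => ?_
      have hcs := Finset.sum_mul_sq_le_sq_mul_sq Finset.univ k (fun i => v i - U i)
      calc F v * (∑ i, k i * (v i - U i))^2
          ≤ F v * ((∑ i, (k i)^2) * ∑ i, (v i - U i)^2) :=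
            mul_le_mul_of_nonneg_left hcs (hFnonneg v)
        _ = (F v * ∑ i, (v i - U i)^2) * ∑ i, (k i)^2 := by ring
    rw [integral_mul_const] at hmono
    rw [h3T, htr, div_mul_eq_mul_div]
    gcongr
  -- dot product as sum of squares
  have hdot : ∀ w : Fin 3 → ℝ, w ⬝ᵥ w = ∑ i, (w i)^2 := fun w => by
    simp [dotProduct, sq]
  have htt : ∀ w : Fin 3 → ℝ, w ⬝ᵥ (tempTensor ν F *ᵥ w)
      = (1 - ν) * T * (∑ i, (w i)^2) + ν * (w ⬝ᵥ (stress F *ᵥ w)) := by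
    intro w
    rw [tempTensor, Matrix.add_mulVec, Matrix.smul_mulVec, Matrix.smul_mulVec,
      Matrix.one_mulVec, dotProduct_add, dotProduct_smul, dotProduct_smul, smul_eq_mul,
      smul_eq_mul, hdot w, ← hTdef]
  have hmin : 0 < min (1 - ν) (1 + 2*ν) := by
    rw [lt_min_iff]; constructor <;> linarith
  have hmax : 0 < max (1 - ν) (1 + 2*ν) := lt_of_lt_of_le hmin min_le_max
  -- two-sided bounds on the tempTensor quadratic form
  have hbound : ∀ w : Fin 3 → ℝ,
      min (1 - ν) (1 + 2*ν) * T * (∑ i, (w i)^2) ≤ w ⬝ᵥ (tempTensor ν F *ᵥ w) ∧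
      w ⬝ᵥ (tempTensor ν F *ᵥ w) ≤ max (1 - ν) (1 + 2*ν) * T * (∑ i, (w i)^2) := by
    intro w
    have h0 := hq0 w
    have h3 := hq3 w
    have hsq0 : (0:ℝ) ≤ ∑ i, (w i)^2 := Finset.sum_nonneg fun i _ => sq_nonneg _
    rw [htt w]
    have hm1 : min (1 - ν) (1 + 2*ν) ≤ 1 - ν := min_le_left _ _
    have hm2 : min (1 - ν) (1 + 2*ν) ≤ 1 + 2*ν := min_le_right _ _
    have hM1 : 1 - ν ≤ max (1 - ν) (1 + 2*ν) := le_max_left _ _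
    have hM2 : 1 + 2*ν ≤ max (1 - ν) (1 + 2*ν) := le_max_right _ _
    rcases le_or_gt 0 ν with hν | hν
    · constructor
      · nlinarith [mul_nonneg hν h0,
          mul_nonneg (mul_nonneg hT.le hsq0) (sub_nonneg.mpr hm1)]
      · nlinarith [mul_nonneg hν (sub_nonneg.mpr h3),
          mul_nonneg (mul_nonneg hT.le hsq0) (sub_nonneg.mpr hM2)]
    · constructor
      · nlinarith [mul_nonneg (neg_nonneg.mpr hν.le) (sub_nonneg.mpr h3),
          mul_nonneg (mul_nonneg hT.le hsq0) (sub_nonneg.mpr hm2)]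
      · nlinarith [mul_nonneg (neg_nonneg.mpr hν.le) h0,
          mul_nonneg (mul_nonneg hT.le hsq0) (sub_nonneg.mpr hM1)]
  -- symmetry
  have hsymm : (tempTensor ν F)ᵀ = tempTensor ν F := by
    have hst : (stress F)ᵀ = stress F := by
      ext i j
      simp only [Matrix.transpose_apply, stress, Matrix.of_apply]
      rw [show (fun v : Fin 3 → ℝ => F v * (v j - bulkVel F j) * (v i - bulkVel F i))
          = fun v => F v * (v i - bulkVel F i) * (v j - bulkVel F j) from
          funext fun v => by ring]
    rw [tempTensor, Matrix.transpose_add, Matrix.transpose_smul, Matrix.transpose_smul,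
      Matrix.transpose_one, hst]
  have hherm : (tempTensor ν F).IsHermitian :=
    (Matrix.conjTranspose_eq_transpose_of_trivial _).trans hsymm
  -- positive definiteness
  have hpd : (tempTensor ν F).PosDef := by
    refine Matrix.PosDef.of_dotProduct_mulVec_pos hherm fun x hx => ?_
    have hxpos : 0 < ∑ i, (x i)^2 := by
      obtain ⟨i, hi⟩ := Function.ne_iff.mp hx
      exact Finset.sum_pos' (fun j _ => sq_nonneg _) ⟨i, Finset.mem_univ i, lt_of_le_of_ne (sq_nonneg _) (Ne.symm (pow_ne_zero 2 hi))⟩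
    have hb := (hbound x).1
    simp only [star_trivial]
    calc (0:ℝ) < min (1 - ν) (1 + 2*ν) * T * ∑ i, (x i)^2 := by positivity
      _ ≤ x ⬝ᵥ (tempTensor ν F *ᵥ x) := hb
  have hdet : IsUnit (tempTensor ν F).det := (Matrix.isUnit_iff_isUnit_det _).mp hpd.isUnit
  -- square root of A
  set A := tempTensor ν F with hA
  have hps : A.PosSemidef := hpd.posSemidef
  open scoped MatrixOrder in
  have hSps : Matrix.PosSemidef (CFC.sqrt A) := (CFC.sqrt_nonneg A).posSemidef
  open scoped MatrixOrder in
  set S := CFC.sqrt A with hS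
  open scoped MatrixOrder in
  have hSS : S * S = A := CFC.sqrt_mul_sqrt_self A hps.nonneg
  have hSt : Sᵀ = S := by
    ext i j
    rw [Matrix.transpose_apply]
    have h := congrFun (congrFun hSps.1 i) j
    simpa [Matrix.conjTranspose_apply] using h
  refine ⟨hpd.isUnit, fun k => ?_⟩
  set y := A⁻¹ *ᵥ k with hy
  have hk : A *ᵥ y = k := by
    rw [hy, Matrix.mulVec_mulVec, Matrix.mul_nonsing_inv _ hdet, Matrix.one_mulVec]
  set z := S *ᵥ y with hz
  have hAy : A *ᵥ y = S *ᵥ z := by rw [hz, Matrix.mulVec_mulVec y S S, hSS]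
  have key1 : k ⬝ᵥ y = z ⬝ᵥ z := by
    calc k ⬝ᵥ y = (S *ᵥ z) ⬝ᵥ y := by rw [← hk, hAy]
      _ = z ⬝ᵥ (S *ᵥ y) := symm_dot hSt _ _
      _ = z ⬝ᵥ z := by rw [← hz]
  have key2 : k ⬝ᵥ k = z ⬝ᵥ (A *ᵥ z) := by
    calc k ⬝ᵥ k = (S *ᵥ z) ⬝ᵥ (S *ᵥ z) := by rw [← hk, hAy]
      _ = z ⬝ᵥ (S *ᵥ (S *ᵥ z)) := symm_dot hSt _ _
      _ = z ⬝ᵥ ((S * S) *ᵥ z) := by rw [Matrix.mulVec_mulVec z S S]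
      _ = z ⬝ᵥ (A *ᵥ z) := by rw [hSS]
  have hzb := hbound z
  have hk2 : ∑ i, (k i)^2 = z ⬝ᵥ (A *ᵥ z) := by rw [← hdot k, key2]
  have hky : k ⬝ᵥ (A⁻¹ *ᵥ k) = ∑ i, (z i)^2 := by rw [← hy, key1, hdot z]
  constructor
  · rw [hky]
    calc (max (1 - ν) (1 + 2*ν))⁻¹ / T * (∑ i, (k i)^2)
        = (max (1 - ν) (1 + 2*ν))⁻¹ / T * (z ⬝ᵥ (A *ᵥ z)) := by rw [hk2]
      _ ≤ (max (1 - ν) (1 + 2*ν))⁻¹ / T * (max (1 - ν) (1 + 2*ν) * T * ∑ i, (z i)^2) :=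
          mul_le_mul_of_nonneg_left hzb.2 (by positivity)
      _ = ∑ i, (z i)^2 := by
        generalize max (1 - ν) (1 + 2*ν) = M at hmax ⊢; have hM := hmax.ne'; field_simp
  · rw [hky]
    calc (∑ i, (z i)^2)
        = (min (1 - ν) (1 + 2*ν))⁻¹ / T * (min (1 - ν) (1 + 2*ν) * T * ∑ i, (z i)^2) := by
          generalize min (1 - ν) (1 + 2*ν) = M at hmin ⊢; have hM := hmin.ne'; field_simp
      _ ≤ (min (1 - ν) (1 + 2*ν))⁻¹ / T * (z ⬝ᵥ (A *ᵥ z)) :=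
          mul_le_mul_of_nonneg_left hzb.1 (by positivity)
      _ = (min (1 - ν) (1 + 2*ν))⁻¹ / T * (∑ i, (k i)^2) := by rw [hk2]
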